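/- The limit as real x → ∞ of K(x)/Γ(x) equals 1, where K(x) = ∫₀^∞ e^{-t} (t^x - 1)/(t - 1) dt. -/
import Mathlib


open MeasureTheory Filter Topology

/-- Integrand of Kurepa's function, extended by continuity at `t = 1`. -/
noncomputable def kurepaIntegrand (x t : ℝ) : ℝ :=
  if t = 1 then x * Real.exp (-1) else Real.exp (-t) * (t ^ x - 1) / (t - 1)

/-- Kurepa's function `K(x) = ∫₀^∞ e^{-t} (t^x - 1)/(t-1) dt`. -/
noncomputable def kurepaK (x : ℝ) : ℝ := ∫ t in Set.Ioi (0 : ℝ), kurepaIntegrand x t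

/-- Bernoulli-type inequality: for `u > 0` and `x ≥ 1`, `1 + x*(u-1) ≤ u^x`. -/
lemma kurepa_bernoulli {u x : ℝ} (hu : 0 < u) (hx : 1 ≤ x) :
    1 + x * (u - 1) ≤ u ^ x := by
  have := one_add_mul_self_le_rpow_one_add (s := u - 1) (by linarith) hx
  simpa using this

lemma kurepaIntegrand_nonneg {x t : ℝ} (hx : 1 ≤ x) (ht : 0 < t) :
    0 ≤ kurepaIntegrand x t := by
  unfold kurepaIntegrand
  split_ifs with h
  · positivity
  · rcases lt_or_gt_of_ne h with h1 | h1
    · have h2 : t ^ x ≤ 1 := Real.rpow_le_one ht.le h1.le (by linarith)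
      have := Real.exp_pos (-t)
      rw [mul_div_assoc]
      apply mul_nonneg this.le
      exact div_nonneg_iff.mpr (Or.inr ⟨by linarith, by linarith⟩)
    · have h2 : (1:ℝ) ≤ t ^ x := Real.one_le_rpow h1.le (by linarith)
      have := Real.exp_pos (-t)
      rw [mul_div_assoc]
      apply mul_nonneg this.le
      apply div_nonneg <;> linarith

lemma kurepaIntegrand_le {x t : ℝ} (hx : 1 ≤ x) (ht : 0 < t) :
    kurepaIntegrand x t ≤ x * Real.exp (-t) + x * (Real.exp (-t) * t ^ (x - 1)) := by
  have he := Real.exp_pos (-t)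
  have htx1 : (0:ℝ) ≤ t ^ (x - 1) := Real.rpow_nonneg ht.le _
  unfold kurepaIntegrand
  split_ifs with h
  · subst h
    simp only [Real.one_rpow]
    nlinarith
  · rcases lt_or_gt_of_ne h with h1 | h1
    · -- t < 1 : (t^x - 1)/(t - 1) = (1 - t^x)/(1-t) ≤ x
      have hb := kurepa_bernoulli ht hx
      have key : Real.exp (-t) * (t ^ x - 1) / (t - 1) ≤ x * Real.exp (-t) := by
        rw [div_le_iff_of_neg (by linarith : t - 1 < 0)]
        nlinarith
      have hpos : (0:ℝ) ≤ x * (Real.exp (-t) * t ^ (x - 1)) := by positivity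
      linarith
    · -- t > 1 : (t^x - 1)/(t-1) ≤ x * t^(x-1)
      have hb := kurepa_bernoulli (u := 1/t) (by positivity) hx
      have hinv : (1/t : ℝ) ^ x = (t ^ x)⁻¹ := by
        rw [one_div, Real.inv_rpow ht.le]
      have htx : (0:ℝ) < t ^ x := Real.rpow_pos_of_pos ht _
      have hts : t ^ (x - 1) = t ^ x / t := Real.rpow_sub_one ht.ne' x
      have hxt : t ^ x * (1 / t) = t ^ (x - 1) := by
        rw [hts]; field_simp
      have hmul : t ^ (x - 1) * t = t ^ x := by
        rw [hts]; field_simp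
      have key2 : t ^ x - 1 ≤ x * t ^ (x - 1) * (t - 1) := by
        rw [hinv] at hb
        have h3 := mul_le_mul_of_nonneg_left hb htx.le
        rw [mul_inv_cancel₀ htx.ne'] at h3
        have expand : t ^ x * (1 + x * (1 / t - 1)) = t ^ x + x * t ^ (x - 1) - x * t ^ x := by
          rw [← hxt]; ring
        rw [expand] at h3
        calc t ^ x - 1 ≤ x * t ^ x - x * t ^ (x - 1) := by linarith
        _ = x * t ^ (x - 1) * (t - 1) := by rw [← hmul]; ring
      have key : Real.exp (-t) * (t ^ x - 1) / (t - 1) ≤ x * (Real.exp (-t) * t ^ (x - 1)) := by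
        rw [div_le_iff₀ (by linarith : (0:ℝ) < t - 1)]
        nlinarith [mul_le_mul_of_nonneg_left key2 he.le]
      have hpos : (0:ℝ) ≤ x * Real.exp (-t) := by positivity
      linarith

lemma kurepaIntegrand_measurable (x : ℝ) : Measurable (kurepaIntegrand x) := by
  unfold kurepaIntegrand
  apply Measurable.ite
  · simp only [Set.setOf_eq_eq_singleton]
    exact measurableSet_singleton 1
  · exact measurable_const
  · fun_prop

lemma kurepa_bound_integrable {x : ℝ} (hx : 1 ≤ x) :
    IntegrableOn (fun t => x * Real.exp (-t) + x * (Real.exp (-t) * t ^ (x - 1)))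
      (Set.Ioi (0:ℝ)) := by
  apply Integrable.add
  · exact ((exp_neg_integrableOn_Ioi 0 one_pos |>.congr_fun
      (fun t _ => by norm_num) measurableSet_Ioi)).const_mul x
  · exact (Real.GammaIntegral_convergent (by linarith : (0:ℝ) < x)).const_mul x

lemma kurepaIntegrand_integrableOn {x : ℝ} (hx : 1 ≤ x) :
    IntegrableOn (kurepaIntegrand x) (Set.Ioi (0:ℝ)) := by
  apply (kurepa_bound_integrable hx).mono'
    ((kurepaIntegrand_measurable x).aestronglyMeasurable)
  filter_upwards [ae_restrict_mem measurableSet_Ioi] with t ht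
  rw [Real.norm_eq_abs, abs_of_nonneg (kurepaIntegrand_nonneg hx ht)]
  exact kurepaIntegrand_le hx ht

/-- The functional equation step on the level of integrands. -/
lemma kurepaIntegrand_step (x : ℝ) {t : ℝ} (ht : 0 < t) :
    kurepaIntegrand x t = kurepaIntegrand (x - 1) t + Real.exp (-t) * t ^ (x - 1) := by
  unfold kurepaIntegrand
  split_ifs with h
  · subst h; simp [Real.one_rpow]; ring
  · have h1 : t - 1 ≠ 0 := sub_ne_zero.mpr h
    have h2 : t ^ x = t ^ (x - 1) * t := by
      rw [← Real.rpow_add_one ht.ne' (x - 1)]; ring_nf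
    field_simp
    rw [h2]; ring

lemma kurepaK_step {x : ℝ} (hx : 2 ≤ x) :
    kurepaK x = kurepaK (x - 1) + Real.Gamma x := by
  have h1 : IntegrableOn (kurepaIntegrand (x - 1)) (Set.Ioi (0:ℝ)) :=
    kurepaIntegrand_integrableOn (by linarith)
  have h2 := Real.GammaIntegral_convergent (by linarith : (0:ℝ) < x)
  rw [kurepaK, kurepaK, Real.Gamma_eq_integral (by linarith : (0:ℝ) < x),
    ← integral_add h1 h2]
  apply setIntegral_congr_fun measurableSet_Ioi
  intro t ht
  exact kurepaIntegrand_step x ht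

lemma kurepaK_nonneg {x : ℝ} (hx : 1 ≤ x) : 0 ≤ kurepaK x := by
  apply setIntegral_nonneg measurableSet_Ioi
  intro t ht
  exact kurepaIntegrand_nonneg hx ht

lemma kurepaK_le {x : ℝ} (hx : 1 ≤ x) : kurepaK x ≤ x * (1 + Real.Gamma x) := by
  have h2 := Real.GammaIntegral_convergent (by linarith : (0:ℝ) < x)
  have hb := kurepa_bound_integrable hx
  have : kurepaK x ≤ ∫ t in Set.Ioi (0:ℝ),
      (x * Real.exp (-t) + x * (Real.exp (-t) * t ^ (x - 1))) := by
    apply integral_mono_ae (kurepaIntegrand_integrableOn hx) hb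
    filter_upwards [ae_restrict_mem measurableSet_Ioi] with t ht
    exact kurepaIntegrand_le hx ht
  refine this.trans_eq ?_
  rw [integral_add (((exp_neg_integrableOn_Ioi 0 one_pos |>.congr_fun
      (fun t _ => by norm_num) measurableSet_Ioi)).const_mul x) (h2.const_mul x),
    integral_const_mul, integral_const_mul, integral_exp_neg_Ioi_zero,
    ← Real.Gamma_eq_integral (by linarith : (0:ℝ) < x)]
  ring

lemma one_le_Gamma {y : ℝ} (hy : 2 ≤ y) : 1 ≤ Real.Gamma y := by
  calc (1:ℝ) = Real.Gamma 2 := Real.Gamma_two.symm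
  _ ≤ Real.Gamma y := Real.Gamma_strictMonoOn_Ici.monotoneOn (by norm_num) hy hy

theorem kurepaK_asymp_gamma :
    Tendsto (fun x : ℝ => kurepaK x / Real.Gamma x) atTop (𝓝 1) := by
  have key : ∀ x : ℝ, 4 ≤ x → |kurepaK x / Real.Gamma x - 1| ≤ 3 / (x - 1) := by
    intro x hx
    have hΓx : 0 < Real.Gamma x := Real.Gamma_pos_of_pos (by linarith)
    have hΓ1 : 0 < Real.Gamma (x - 1) := Real.Gamma_pos_of_pos (by linarith)
    have hΓ2 : 0 < Real.Gamma (x - 2) := Real.Gamma_pos_of_pos (by linarith)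
    have hΓ2' : 1 ≤ Real.Gamma (x - 2) := one_le_Gamma (by linarith)
    -- functional equations
    have e1 : Real.Gamma x = (x - 1) * Real.Gamma (x - 1) := by
      have := Real.Gamma_add_one (show x - 1 ≠ 0 by linarith)
      rw [sub_add_cancel] at this
      exact this
    have e2 : Real.Gamma (x - 1) = (x - 2) * Real.Gamma (x - 2) := by
      have := Real.Gamma_add_one (show x - 2 ≠ 0 by linarith)
      rw [show x - 2 + 1 = x - 1 by ring] at this
      exact this
    have s1 : kurepaK x = kurepaK (x - 1) + Real.Gamma x := kurepaK_step (by linarith)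
    have s2 : kurepaK (x - 1) = kurepaK (x - 2) + Real.Gamma (x - 1) := by
      have := kurepaK_step (x := x - 1) (by linarith)
      rw [show x - 1 - 1 = x - 2 by ring] at this
      exact this
    have hK2 : 0 ≤ kurepaK (x - 2) := kurepaK_nonneg (by linarith)
    have hK2' : kurepaK (x - 2) ≤ (x - 2) * (1 + Real.Gamma (x - 2)) :=
      kurepaK_le (by linarith)
    have hfrac : kurepaK x / Real.Gamma x - 1
        = (Real.Gamma (x - 1) + kurepaK (x - 2)) / Real.Gamma x := by
      rw [s1, s2]; field_simp; ring
    rw [hfrac, abs_of_nonneg (by positivity)]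
    rw [div_le_div_iff₀ hΓx (by linarith : (0:ℝ) < x - 1)]
    have h1 : Real.Gamma (x - 1) * (x - 1) = Real.Gamma x := by rw [e1]; ring
    have hb : kurepaK (x - 2) * (x - 1) ≤ 2 * Real.Gamma x := by
      have : kurepaK (x - 2) * (x - 1) ≤ (x - 2) * (1 + Real.Gamma (x - 2)) * (x - 1) := by
        apply mul_le_mul_of_nonneg_right hK2' (by linarith)
      refine this.trans ?_
      rw [e1, e2]
      nlinarith
    nlinarith
  have h0 : Tendsto (fun x : ℝ => kurepaK x / Real.Gamma x - 1) atTop (𝓝 0) := by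
    apply squeeze_zero_norm' (a := fun x : ℝ => 3 / (x - 1))
    · filter_upwards [eventually_ge_atTop (4:ℝ)] with x hx
      simpa using key x hx
    · apply Tendsto.div_atTop tendsto_const_nhds
      exact tendsto_atTop_add_const_right _ _ tendsto_id
  have := h0.add (tendsto_const_nhds (x := (1:ℝ)))
  simpa using this
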